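/- For all x > 0, sinh²x/x² + tanh x/x > 2. -/

import Mathlib

open Real Set

lemma aux_cosh_lb (x : ℝ) (hx : 0 < x) : 1 + x ^ 2 / 2 < Real.cosh x := by
  have key : StrictMonoOn (fun y => Real.cosh y - 1 - y ^ 2 / 2) (Ici 0) := by
    refine strictMonoOn_of_deriv_pos (convex_Ici _) (by fun_prop) fun y hy => ?_
    rw [interior_Ici, mem_Ioi] at hy
    have hd : HasDerivAt (fun y => Real.cosh y - 1 - y ^ 2 / 2) (Real.sinh y - y) y := by
      have := ((Real.hasDerivAt_cosh y).sub_const 1).sub ((hasDerivAt_pow 2 y).div_const 2)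
      refine this.congr_deriv ?_ <;> push_cast <;> ring
    rw [hd.deriv, sub_pos]
    exact (Real.self_lt_sinh_iff).2 hy
  have := key (self_mem_Ici) (le_of_lt hx : (0:ℝ) ≤ x) hx
  simp only [Real.cosh_zero] at this
  norm_num at this
  linarith

lemma aux_sinh_lb (x : ℝ) (hx : 0 < x) : x + x ^ 3 / 6 < Real.sinh x := by
  have key : StrictMonoOn (fun y => Real.sinh y - y - y ^ 3 / 6) (Ici 0) := by
    refine strictMonoOn_of_deriv_pos (convex_Ici _) (by fun_prop) fun y hy => ?_
    rw [interior_Ici, mem_Ioi] at hy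
    have hd : HasDerivAt (fun y => Real.sinh y - y - y ^ 3 / 6)
        (Real.cosh y - 1 - y ^ 2 / 2) y := by
      have := ((Real.hasDerivAt_sinh y).sub (hasDerivAt_id y)).sub
        ((hasDerivAt_pow 3 y).div_const 6)
      refine this.congr_deriv ?_ <;> push_cast <;> ring
    rw [hd.deriv, sub_pos]
    have := aux_cosh_lb y hy
    linarith
  have := key (self_mem_Ici) (le_of_lt hx : (0:ℝ) ≤ x) hx
  simp only [Real.sinh_zero] at this
  norm_num at this
  linarith

lemma aux_tanh (x : ℝ) (hx : 0 < x) : Real.sinh x ≤ x * Real.cosh x := by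
  have key : MonotoneOn (fun y => y * Real.cosh y - Real.sinh y) (Ici 0) := by
    refine monotoneOn_of_deriv_nonneg (convex_Ici _) (by fun_prop)
      (fun y hy => ((differentiable_id.mul Real.differentiable_cosh).sub
        Real.differentiable_sinh).differentiableAt.differentiableWithinAt) fun y hy => ?_
    rw [interior_Ici, mem_Ioi] at hy
    have hd : HasDerivAt (fun y => y * Real.cosh y - Real.sinh y) (y * Real.sinh y) y := by
      have := ((hasDerivAt_id y).mul (Real.hasDerivAt_cosh y)).sub (Real.hasDerivAt_sinh y)
      refine this.congr_deriv ?_ <;> simp [id] <;> ring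
    rw [hd.deriv]
    exact mul_nonneg hy.le (Real.sinh_nonneg_iff.2 hy.le)
  have := key (self_mem_Ici) (le_of_lt hx : (0:ℝ) ≤ x) hx.le
  simp only [Real.sinh_zero, Real.cosh_zero] at this
  norm_num at this
  linarith

lemma aux_key (x : ℝ) (hx : 0 < x) : x ^ 3 * Real.cosh x < Real.sinh x ^ 3 := by
  have key : StrictMonoOn (fun y => Real.sinh y ^ 3 - y ^ 3 * Real.cosh y) (Ici 0) := by
    refine strictMonoOn_of_deriv_pos (convex_Ici _) (by fun_prop) fun y hy => ?_
    rw [interior_Ici, mem_Ioi] at hy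
    have hd : HasDerivAt (fun y => Real.sinh y ^ 3 - y ^ 3 * Real.cosh y)
        (3 * Real.sinh y ^ 2 * Real.cosh y - (3 * y ^ 2 * Real.cosh y + y ^ 3 * Real.sinh y))
        y := by
      have h1 : HasDerivAt (fun y => Real.sinh y ^ 3)
          (3 * Real.sinh y ^ 2 * Real.cosh y) y := by
        have := (Real.hasDerivAt_sinh y).pow 3
        refine this.congr_deriv ?_ <;> push_cast <;> ring
      have h2 : HasDerivAt (fun y => y ^ 3 * Real.cosh y)
          (3 * y ^ 2 * Real.cosh y + y ^ 3 * Real.sinh y) y := by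
        have := (hasDerivAt_pow 3 y).mul (Real.hasDerivAt_cosh y)
        refine this.congr_deriv ?_ <;> push_cast <;> ring
      exact h1.sub h2
    rw [hd.deriv]
    have hs := aux_sinh_lb y hy
    have hy4 : y ^ 2 + y ^ 4 / 3 < Real.sinh y ^ 2 := by
      have h6 := mul_self_lt_mul_self (by positivity : (0:ℝ) ≤ y + y ^ 3 / 6) hs
      nlinarith [sq_nonneg (y ^ 3)]
    have hc : (0:ℝ) < Real.cosh y := Real.cosh_pos y
    have ht := aux_tanh y hy
    -- 3 cosh (sinh² - y²) > y⁴ cosh ≥ y³ sinh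
    nlinarith [mul_pos (pow_pos hy 3) (Real.sinh_pos_iff.2 hy),
      mul_lt_mul_of_pos_left hy4 hc, mul_le_mul_of_nonneg_left ht (pow_pos hy 3).le]
  have := key (self_mem_Ici) (le_of_lt hx : (0:ℝ) ≤ x) hx
  simp only [Real.sinh_zero] at this
  norm_num at this
  linarith

theorem stmt_6 (x : ℝ) (hx : 0 < x) :
    Real.sinh x ^ 2 / x ^ 2 + Real.tanh x / x > 2 := by
  have hs : 0 < Real.sinh x := Real.sinh_pos_iff.2 hx
  have hc : 0 < Real.cosh x := Real.cosh_pos x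
  set a := Real.sinh x ^ 2 / x ^ 2 with ha
  set b := Real.tanh x / x with hb
  have hapos : 0 < a := div_pos (pow_pos hs 2) (pow_pos hx 2)
  have hbpos : 0 < b := by
    rw [hb, Real.tanh_eq_sinh_div_cosh]
    positivity
  have hab : 1 < a * b := by
    rw [ha, hb, Real.tanh_eq_sinh_div_cosh, div_div, div_mul_div_comm,
      lt_div_iff₀ (by positivity), one_mul]
    nlinarith [aux_key x hx]
  nlinarith [sq_nonneg (a - b)]
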